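/- Let A be an N×N primitive nonnegative matrix, let λ > 0 and let x be a vector with strictly positive entries satisfying xᵀA = λxᵀ. Fix a state k. Then for every integer n ≥ 1, 1 = Σ_{t=0}^{n−1} λ^{−(t+1)} Σ_{i_1,…,i_t ≠ k} A(k,i_1)A(i_1,i_2)⋯A(i_t,k) + λ^{−n} Σ_{i_1,…,i_{n−1} ≠ k} (x_{i_1}/x_k) A(i_1,i_2)⋯A(i_{n−1},k), where the sums range over tuples of states all different from k (the t = 0 term of the first sum is λ^{−1}A(k,k)). -/

import Mathlib

/-- `pathSumAvoiding A k n j = ∑_{i₁,…,iₙ ≠ k} A k i₁ * A i₁ i₂ * ⋯ * A iₙ j`,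
the sum over all `n`-tuples of states different from `k` of the products of
the entries of `A` along the path `k, i₁, …, iₙ, j`.  For `n = 0` it is `A k j`. -/
def pathSumAvoiding {N : ℕ} (A : Matrix (Fin N) (Fin N) ℝ) (k : Fin N) :
    ℕ → Fin N → ℝ
  | 0 => fun j => A k j
  | n + 1 => fun j => ∑ i, if i = k then 0 else pathSumAvoiding A k n i * A i j

/-- `weightedPathSumAvoiding A k x n j = ∑_{i₁,…,iₙ ≠ k} x i₁ * A i₁ i₂ * ⋯ * A iₙ j`,
the sum over all `n`-tuples of states different from `k` of the entry `x i₁`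
times the product of the entries of `A` along the path `i₁, …, iₙ, j`.
For `n = 0` it is `x j`. -/
def weightedPathSumAvoiding {N : ℕ} (A : Matrix (Fin N) (Fin N) ℝ) (k : Fin N)
    (x : Fin N → ℝ) : ℕ → Fin N → ℝ
  | 0 => fun j => x j
  | n + 1 => fun j =>
      ∑ i, if i = k then 0 else weightedPathSumAvoiding A k x n i * A i j

/-- **Iterated substitution identity.**  Let `A` be a primitive nonnegative
matrix, `lam > 0` and `x` a positive left eigenvector: `xᵀA = lam xᵀ`.  Fix a
state `k`.  Then for every `n ≥ 1`,
`1 = ∑_{t=0}^{n−1} lam⁻⁽ᵗ⁺¹⁾ ∑_{i₁,…,i_t ≠ k} A(k,i₁)⋯A(i_t,k)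
   + lam⁻ⁿ ∑_{i₁,…,iₙ ≠ k} (x i₁ / x k) A(i₁,i₂)⋯A(iₙ,k)`,
where the `t = 0` term of the first sum is `lam⁻¹ A(k,k)`, and the remainder
terms is the sum over the tuples of states different from `k` arising after
`n` substitutions of the eigenvector equation. -/
theorem iterated_eigenvector_substitution_identity
    {N : ℕ} (A : Matrix (Fin N) (Fin N) ℝ)
    (hA_nonneg : ∀ i j, 0 ≤ A i j)
    (hA_prim : ∃ m : ℕ, 0 < m ∧ ∀ i j, 0 < (A ^ m) i j)
    (lam : ℝ) (hlam_pos : 0 < lam)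
    (x : Fin N → ℝ) (hx_pos : ∀ i, 0 < x i)
    (hx_eig : ∀ j, ∑ i, x i * A i j = lam * x j)
    (k : Fin N) :
    ∀ n : ℕ, 1 ≤ n →
      (1 : ℝ) = (∑ t ∈ Finset.range n, lam⁻¹ ^ (t + 1) * pathSumAvoiding A k t k)
        + lam⁻¹ ^ n * (weightedPathSumAvoiding A k x n k / x k) := by
  have hsum : ∀ f : Fin N → ℝ, ∑ i, (if i = k then 0 else f i) = (∑ i, f i) - f k := by
    intro f
    have h1 : ∀ i, (if i = k then (0:ℝ) else f i) = f i - (if i = k then f i else 0) := by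
      intro i; by_cases h : i = k <;> simp [h]
    simp [h1, Finset.sum_sub_distrib, Finset.sum_ite_eq']
  have key : ∀ n j, weightedPathSumAvoiding A k x (n + 1) j
      = lam * weightedPathSumAvoiding A k x n j - x k * pathSumAvoiding A k n j := by
    intro n
    induction n with
    | zero =>
      intro j
      simp only [weightedPathSumAvoiding, pathSumAvoiding, hsum fun i => x i * A i j, hx_eig j]
    | succ n ih =>
      intro j
      have : (fun i => (if i = k then (0:ℝ) else weightedPathSumAvoiding A k x (n + 1) i * A i j))
          = fun i => (lam * (if i = k then 0 else weightedPathSumAvoiding A k x n i * A i j)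
            - x k * (if i = k then 0 else pathSumAvoiding A k n i * A i j)) := by
        funext i
        by_cases h : i = k
        · simp [h]
        · rw [if_neg h, if_neg h, if_neg h, ih i]; ring
      show (∑ i, if i = k then (0:ℝ) else weightedPathSumAvoiding A k x (n + 1) i * A i j) = _
      rw [this, Finset.sum_sub_distrib, ← Finset.mul_sum, ← Finset.mul_sum]
      rfl
  have hxk := (hx_pos k).ne'
  intro n _
  induction n with
  | zero => simp [weightedPathSumAvoiding, div_self hxk]
  | succ n ih =>
    rcases Nat.eq_zero_or_pos n with h0 | hpos
    · subst h0
      simp only [Finset.sum_range_one, pow_one, weightedPathSumAvoiding, pathSumAvoiding]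
      rw [hsum fun i => x i * A i k, hx_eig k]
      field_simp
      ring_nf
      simp [pathSumAvoiding, hlam_pos.ne']
    · rw [Finset.sum_range_succ]
      have := ih hpos
      rw [key n k]
      rw [this]
      have hln : lam ≠ 0 := hlam_pos.ne'
      field_simp
      ring_nf
      rw [mul_inv_cancel₀ hln, one_mul]
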